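/- Let n ≥ 2. The assignment (i, i+1) ↦ ρ_i determines a well-defined group homomorphism s : S_n → UVB_n which is a section of ι (that is, ι ∘ s = id_{S_n}), and UVB_n is the internal semidirect product of the normal subgroup UVP_n by the subgroup s(S_n). In particular UVB_n is isomorphic to the semidirect product UVP_n ⋊ S_n, where S_n acts by permuting the indices of the generators λ_{i,j} of UVP_n. -/

import Mathlib

/-!  Common setup: the unrestricted virtual braid group `UVB n`, its generators
σ_k, ρ_k (1-based indices), the elements λ_{i,j} and B_{i,j}, the permutation
homomorphism ι (characterized by `IsIota`), the section s : S_n → UVB n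
(characterized by `IsPermSection`), and fused Markov equivalence. -/

/-- Generators of the unrestricted virtual braid group `UVB n`:
`Sum.inl i` is the classical generator σ_{i+1} and `Sum.inr i` is the virtual
generator ρ_{i+1}, for `i : Fin (n-1)` (so the 1-based indices are `1, …, n-1`). -/
abbrev UVBGen (n : ℕ) := Sum (Fin (n - 1)) (Fin (n - 1))

namespace UVBGen
def sg {n : ℕ} (i : Fin (n - 1)) : FreeGroup (UVBGen n) := FreeGroup.of (Sum.inl i)
def rg {n : ℕ} (i : Fin (n - 1)) : FreeGroup (UVBGen n) := FreeGroup.of (Sum.inr i)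
end UVBGen

open UVBGen in
/-- The defining relations of the unrestricted virtual braid group. -/
def uvbRels (n : ℕ) : Set (FreeGroup (UVBGen n)) :=
  {r | (∃ i j : Fin (n - 1), (j : ℕ) = (i : ℕ) + 1 ∧
          (r = sg i * sg j * sg i * (sg j * sg i * sg j)⁻¹ ∨
           r = rg i * rg j * rg i * (rg j * rg i * rg j)⁻¹ ∨
           r = rg i * rg j * sg i * (sg j * rg i * rg j)⁻¹ ∨
           r = rg i * sg j * sg i * (sg j * sg i * rg j)⁻¹ ∨
           r = rg j * sg i * sg j * (sg i * sg j * rg i)⁻¹)) ∨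
       (∃ i j : Fin (n - 1), ((i : ℕ) + 2 ≤ (j : ℕ) ∨ (j : ℕ) + 2 ≤ (i : ℕ)) ∧
          (r = sg i * sg j * (sg j * sg i)⁻¹ ∨
           r = rg i * rg j * (rg j * rg i)⁻¹ ∨
           r = sg i * rg j * (rg j * sg i)⁻¹)) ∨
       (∃ i : Fin (n - 1), r = rg i * rg i)}

/-- The unrestricted virtual braid group on `n` strands. -/
abbrev UVB (n : ℕ) := PresentedGroup (uvbRels n)

namespace UVB

/-- The generator σ_k (1-based index; meaningful for `1 ≤ k ≤ n-1`, junk value `1` otherwise). -/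
def sigma (n k : ℕ) : UVB n :=
  if h : 1 ≤ k ∧ k ≤ n - 1 then PresentedGroup.of (Sum.inl ⟨k - 1, by omega⟩) else 1

/-- The generator ρ_k (1-based index; meaningful for `1 ≤ k ≤ n-1`, junk value `1` otherwise). -/
def rho (n k : ℕ) : UVB n :=
  if h : 1 ≤ k ∧ k ≤ n - 1 then PresentedGroup.of (Sum.inr ⟨k - 1, by omega⟩) else 1

/-- The element λ_{i,j} of `UVB n` (1-based indices `1 ≤ i ≠ j ≤ n`; junk value `1` if `i = j`).
For `i < j`:  `λ_{i,j} = ρ_{j-1}⋯ρ_{i+1} · ρ_i σ_i⁻¹ · ρ_{i+1}⋯ρ_{j-1}` and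
`λ_{j,i} = ρ_{j-1}⋯ρ_{i+1} · σ_i⁻¹ ρ_i · ρ_{i+1}⋯ρ_{j-1}`. -/
def lam (n i j : ℕ) : UVB n :=
  if i < j then
    (((List.range' (i + 1) (j - 1 - i)).reverse.map (rho n)).prod) *
      (rho n i * (sigma n i)⁻¹) *
      (((List.range' (i + 1) (j - 1 - i)).map (rho n)).prod)
  else if j < i then
    (((List.range' (j + 1) (i - 1 - j)).reverse.map (rho n)).prod) *
      ((sigma n j)⁻¹ * rho n j) *
      (((List.range' (j + 1) (i - 1 - j)).map (rho n)).prod)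
  else 1

/-- The element `B_{i,j} = ρ_{j-1}ρ_{j-2}⋯ρ_{i+1}ρ_i` for `i < j`, and `1` otherwise. -/
def B (n i j : ℕ) : UVB n :=
  if i < j then ((List.range' i (j - i)).reverse.map (rho n)).prod else 1

/-- The subgroup `U_j` of `UVB n` generated by `{λ_{i,j}, λ_{j,i} : 1 ≤ i < j}`. -/
def U (n j : ℕ) : Subgroup (UVB n) :=
  Subgroup.closure {x | ∃ i, 1 ≤ i ∧ i < j ∧ (x = lam n i j ∨ x = lam n j i)}

end UVB

/-- `ι : UVB n →* S_n` is the homomorphism sending σ_k and ρ_k to the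
transposition (k, k+1) (written 0-based on `Fin n`). -/
def IsIota (n : ℕ) (ι : UVB n →* Equiv.Perm (Fin n)) : Prop :=
  ∀ (k : ℕ) (h1 : 1 ≤ k) (h2 : k ≤ n - 1),
    ι (UVB.sigma n k) = Equiv.swap ⟨k - 1, by omega⟩ ⟨k, by omega⟩ ∧
    ι (UVB.rho n k) = Equiv.swap ⟨k - 1, by omega⟩ ⟨k, by omega⟩

/-- `s : S_n →* UVB n` is the homomorphism sending the transposition (k, k+1) to ρ_k. -/
def IsPermSection (n : ℕ) (s : Equiv.Perm (Fin n) →* UVB n) : Prop :=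
  ∀ (k : ℕ) (h1 : 1 ≤ k) (h2 : k ≤ n - 1),
    s (Equiv.swap ⟨k - 1, by omega⟩ ⟨k, by omega⟩) = UVB.rho n k

/-- The number of orbits of a permutation of `Fin n`
(= number of fixed points + number of nontrivial cycles). -/
def numOrbits {n : ℕ} (π : Equiv.Perm (Fin n)) : ℕ :=
  (Finset.univ.filter fun x => π x = x).card + π.cycleType.card

namespace UVB

private def embedGen (n : ℕ) : UVBGen n → UVBGen (n + 1)
  | Sum.inl i => Sum.inl ⟨i.val, by have := i.isLt; omega⟩
  | Sum.inr i => Sum.inr ⟨i.val, by have := i.isLt; omega⟩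

open UVBGen in
/-- The natural inclusion `UVB n →* UVB (n+1)` (σ_k ↦ σ_k, ρ_k ↦ ρ_k). -/
def incl (n : ℕ) : UVB n →* UVB (n + 1) :=
  PresentedGroup.toGroup (f := fun x => PresentedGroup.of (embedGen n x)) (by
    have key : (FreeGroup.lift fun x => (PresentedGroup.of (embedGen n x) : UVB (n + 1)))
        = (PresentedGroup.mk (uvbRels (n + 1))).comp (FreeGroup.map (embedGen n)) := by
      ext x
      simp [PresentedGroup.of]
    intro r hr
    rw [key]
    simp only [MonoidHom.comp_apply]
    have hmem : FreeGroup.map (embedGen n) r ∈ uvbRels (n + 1) := by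
      have hsg : ∀ i : Fin (n - 1), FreeGroup.map (embedGen n) (sg i)
          = sg (⟨i.val, by have := i.isLt; omega⟩ : Fin (n + 1 - 1)) := by
        intro i; simp [sg, embedGen]
      have hrg : ∀ i : Fin (n - 1), FreeGroup.map (embedGen n) (rg i)
          = rg (⟨i.val, by have := i.isLt; omega⟩ : Fin (n + 1 - 1)) := by
        intro i; simp [rg, embedGen]
      rcases hr with ⟨i, j, hij, hc⟩ | ⟨i, j, hij, hc⟩ | ⟨i, hc⟩
      · refine Or.inl ⟨⟨i.val, by have := i.isLt; omega⟩, ⟨j.val, by have := j.isLt; omega⟩,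
          by simpa using hij, ?_⟩
        rcases hc with h | h | h | h | h <;> subst h <;>
          simp only [map_mul, map_inv, hsg, hrg] <;> tauto
      · refine Or.inr (Or.inl ⟨⟨i.val, by have := i.isLt; omega⟩, ⟨j.val, by have := j.isLt; omega⟩,
          by simpa using hij, ?_⟩)
        rcases hc with h | h | h <;> subst h <;>
          simp only [map_mul, map_inv, hsg, hrg] <;> tauto
      · refine Or.inr (Or.inr ⟨⟨i.val, by have := i.isLt; omega⟩, ?_⟩)
        subst hc
        simp only [map_mul, hsg, hrg]
    exact (QuotientGroup.eq_one_iff _).mpr (Subgroup.subset_normalClosure hmem))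

end UVB

/-- The elementary fused Markov moves on the disjoint union of the groups `UVB n`:
conjugation, and the three right stabilizations (positive, negative, virtual). -/
inductive MarkovBase : (Σ n, UVB n) → (Σ n, UVB n) → Prop
  | conj (n : ℕ) (α γ : UVB n) : MarkovBase ⟨n, α⟩ ⟨n, γ * α * γ⁻¹⟩
  | stabPos (n : ℕ) (α : UVB n) :
      MarkovBase ⟨n, α⟩ ⟨n + 1, UVB.incl n α * UVB.sigma (n + 1) n⟩
  | stabNeg (n : ℕ) (α : UVB n) :
      MarkovBase ⟨n, α⟩ ⟨n + 1, UVB.incl n α * (UVB.sigma (n + 1) n)⁻¹⟩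
  | stabVirt (n : ℕ) (α : UVB n) :
      MarkovBase ⟨n, α⟩ ⟨n + 1, UVB.incl n α * UVB.rho (n + 1) n⟩

/-- Fused Markov equivalence: the smallest equivalence relation generated by the
elementary Markov moves.  By Kamada's theorem, two unrestricted virtual braids are
fused Markov equivalent iff their closures are equivalent fused links. -/
def Markov : (Σ n, UVB n) → (Σ n, UVB n) → Prop := Relation.EqvGen MarkovBase

/-! ## Statement 2 -/




section Words
variable {G : Type*} [Group G]

/-- descending word `r (b-1) * ⋯ * r a` -/
def wd (r : ℕ → G) (a b : ℕ) : G := ((List.range' a (b - a)).reverse.map r).prod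
/-- ascending word `r a * ⋯ * r (b-1)` -/
def wu (r : ℕ → G) (a b : ℕ) : G := ((List.range' a (b - a)).map r).prod

variable (r : ℕ → G)

lemma wd_empty {a b : ℕ} (h : b ≤ a) : wd r a b = 1 := by
  simp [wd, Nat.sub_eq_zero_of_le h]

lemma wd_split {a c b : ℕ} (h1 : a ≤ c) (h2 : c ≤ b) :
    wd r a b = wd r c b * wd r a c := by
  have L : List.range' a (b - a) = List.range' a (c - a) ++ List.range' c (b - c) := by
    have h : List.range' a (c - a) ++ List.range' (a + (c - a)) (b - c)
        = List.range' a (c - a + (b - c)) := List.range'_append_1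
    rw [show a + (c - a) = c by omega] at h
    rw [h]
    congr 1
    omega
  unfold wd
  rw [L, List.reverse_append, List.map_append, List.prod_append]

lemma wd_peel_top {a b : ℕ} (h : a ≤ b) : wd r a (b + 1) = r b * wd r a b := by
  rw [wd_split r (c := b) h (by omega)]
  congr 1
  simp [wd]

lemma wd_peel_bot {a b : ℕ} (h : a < b) : wd r a b = wd r (a + 1) b * r a := by
  rw [wd_split r (c := a + 1) (by omega) h]
  congr 1
  simp [wd]

lemma wd_pair {t : ℕ} : wd r t (t + 2) = r (t + 1) * r t := by
  simp [wd, List.range']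

lemma wd_inv (hinv : ∀ j, r j * r j = 1) (a b : ℕ) : (wd r a b)⁻¹ = wu r a b := by
  have hr : ∀ j, (r j)⁻¹ = r j := fun j => inv_eq_of_mul_eq_one_right (hinv j)
  rw [wd, List.prod_inv_reverse, wu, List.map_map, List.map_reverse, List.reverse_reverse]
  congr 1
  exact List.map_congr_left fun x _ => hr x

lemma commute_wd {g : G} {a b : ℕ}
    (h : ∀ x, a ≤ x → x < b → Commute g (r x)) : Commute g (wd r a b) := by
  apply Commute.list_prod_right
  intro y hy
  rw [List.mem_map] at hy
  obtain ⟨x, hx, rfl⟩ := hy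
  rw [List.mem_reverse, List.mem_range'_1] at hx
  exact h x hx.1 (by omega)

lemma commute_wd_lo (hcomm : ∀ j k, j + 2 ≤ k → Commute (r j) (r k))
    {t a b : ℕ} (h : t + 2 ≤ a) : Commute (r t) (wd r a b) :=
  commute_wd r fun x hx _ => hcomm t x (by omega)

lemma commute_wd_hi (hcomm : ∀ j k, j + 2 ≤ k → Commute (r j) (r k))
    {t a b : ℕ} (h : b + 1 ≤ t) : Commute (r t) (wd r a b) :=
  commute_wd r fun x _ hx => (hcomm x t (by omega)).symm

lemma wd_push (hcomm : ∀ j k, j + 2 ≤ k → Commute (r j) (r k))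
    {t a b : ℕ} (hbr : r t * r (t + 1) * r t = r (t + 1) * r t * r (t + 1))
    (h1 : a ≤ t) (h2 : t + 2 ≤ b) :
    r t * wd r a b = wd r a b * r (t + 1) := by
  have e1 : wd r a b = wd r (t + 2) b * (r (t + 1) * r t) * wd r a t := by
    rw [wd_split r (c := t) h1 (by omega), wd_split r (c := t + 2) (by omega) h2, wd_pair,
      mul_assoc]
  have c1 : r t * wd r (t + 2) b = wd r (t + 2) b * r t :=
    (commute_wd_lo r hcomm (le_refl _)).eq
  have c2 : r (t + 1) * wd r a t = wd r a t * r (t + 1) :=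
    (commute_wd_hi r hcomm (le_refl _)).eq
  calc r t * wd r a b
      = wd r (t + 2) b * (r t * r (t + 1) * r t) * wd r a t := by
        rw [e1, ← mul_assoc, ← mul_assoc, c1]; group
    _ = wd r (t + 2) b * (r (t + 1) * r t * r (t + 1)) * wd r a t := by rw [hbr]
    _ = wd r (t + 2) b * (r (t + 1) * r t) * (r (t + 1) * wd r a t) := by group
    _ = wd r (t + 2) b * (r (t + 1) * r t) * wd r a t * r (t + 1) := by rw [c2]; group
    _ = wd r a b * r (t + 1) := by rw [e1]

end Words


section CoxLift
variable {G : Type*} [Group G]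

/-- adjacent transposition `(j, j+1)` (0-based) as a permutation of `Fin n`;
junk value `1` out of range. -/
def tsw (n j : ℕ) : Equiv.Perm (Fin n) :=
  if h : j + 1 < n then Equiv.swap ⟨j, by omega⟩ ⟨j + 1, h⟩ else 1

lemma tsw_mul_self (n j : ℕ) : tsw n j * tsw n j = 1 := by
  unfold tsw; split
  · exact Equiv.swap_mul_self _ _
  · simp

lemma tsw_inv (n j : ℕ) : (tsw n j)⁻¹ = tsw n j :=
  inv_eq_of_mul_eq_one_right (tsw_mul_self n j)

lemma tsw_comm (n : ℕ) : ∀ j k, j + 2 ≤ k → Commute (tsw n j) (tsw n k) := by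
  intro j k h
  unfold tsw
  split
  · split
    · rename_i h1 h2
      unfold Commute SemiconjBy
      have key : Equiv.swap (⟨k, by omega⟩ : Fin n) ⟨k + 1, h2⟩ *
          Equiv.swap (⟨j, by omega⟩ : Fin n) ⟨j + 1, h1⟩ *
          (Equiv.swap (⟨k, by omega⟩ : Fin n) ⟨k + 1, h2⟩)⁻¹ =
          Equiv.swap (⟨j, by omega⟩ : Fin n) ⟨j + 1, h1⟩ := by
        rw [← Equiv.swap_apply_apply,
          Equiv.swap_apply_of_ne_of_ne (by simp [Fin.ext_iff]; omega) (by simp [Fin.ext_iff]; omega),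
          Equiv.swap_apply_of_ne_of_ne (by simp [Fin.ext_iff]; omega) (by simp [Fin.ext_iff]; omega)]
      calc Equiv.swap (⟨j, by omega⟩ : Fin n) ⟨j + 1, h1⟩ *
            Equiv.swap (⟨k, by omega⟩ : Fin n) ⟨k + 1, h2⟩
          = (Equiv.swap (⟨k, by omega⟩ : Fin n) ⟨k + 1, h2⟩ *
              Equiv.swap (⟨j, by omega⟩ : Fin n) ⟨j + 1, h1⟩ *
              (Equiv.swap (⟨k, by omega⟩ : Fin n) ⟨k + 1, h2⟩)⁻¹) *
              Equiv.swap (⟨k, by omega⟩ : Fin n) ⟨k + 1, h2⟩ := by rw [key]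
        _ = Equiv.swap (⟨k, by omega⟩ : Fin n) ⟨k + 1, h2⟩ *
              Equiv.swap (⟨j, by omega⟩ : Fin n) ⟨j + 1, h1⟩ := by group
    · exact Commute.one_right _
  · exact Commute.one_left _

lemma tsw_braid (n j : ℕ) (h : j + 2 < n) :
    tsw n j * tsw n (j + 1) * tsw n j = tsw n (j + 1) * tsw n j * tsw n (j + 1) := by
  have hj1 : j + 1 < n := by omega
  have hj2 : j + 1 + 1 < n := h
  rw [tsw, tsw, dif_pos hj1, dif_pos hj2]
  let a : Fin n := ⟨j, by omega⟩
  let b : Fin n := ⟨j + 1, by omega⟩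
  let c : Fin n := ⟨j + 2, by omega⟩
  have hab : a.val = j := rfl
  have hbb : b.val = j + 1 := rfl
  have hcc : c.val = j + 2 := rfl
  show Equiv.swap a b * Equiv.swap b c * Equiv.swap a b
      = Equiv.swap b c * Equiv.swap a b * Equiv.swap b c
  have h1 : Equiv.swap a b * Equiv.swap b c * Equiv.swap a b
      = Equiv.swap (Equiv.swap a b b) (Equiv.swap a b c) := by
    rw [Equiv.swap_apply_apply, Equiv.swap_inv]
  have h2 : Equiv.swap b c * Equiv.swap a b * Equiv.swap b c
      = Equiv.swap (Equiv.swap b c a) (Equiv.swap b c b) := by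
    rw [Equiv.swap_apply_apply, Equiv.swap_inv]
  have e1 : Equiv.swap a b b = a := Equiv.swap_apply_right a b
  have e2 : Equiv.swap a b c = c :=
    Equiv.swap_apply_of_ne_of_ne (Fin.ne_of_val_ne (by rw [hcc, hab]; omega))
      (Fin.ne_of_val_ne (by rw [hcc, hbb]; omega))
  have e3 : Equiv.swap b c a = a :=
    Equiv.swap_apply_of_ne_of_ne (Fin.ne_of_val_ne (by rw [hab, hbb]; omega))
      (Fin.ne_of_val_ne (by rw [hab, hcc]; omega))
  have e4 : Equiv.swap b c b = c := Equiv.swap_apply_left b c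
  rw [h1, h2, e1, e2, e3, e4]

lemma cyc_out {n : ℕ} (p : ℕ) : ∀ m, ∀ x : Fin n, x.val < p ∨ m < x.val →
    wd (tsw n) p m x = x := by
  intro m
  induction m with
  | zero =>
    intro x _
    rw [wd_empty _ (Nat.zero_le p)]
    rfl
  | succ m ih =>
    intro x hx
    by_cases hpm : p ≤ m
    · rw [wd_peel_top _ hpm, Equiv.Perm.mul_apply, ih x (by omega)]
      rw [tsw]
      split
      · exact Equiv.swap_apply_of_ne_of_ne (by simp [Fin.ext_iff]; omega)
          (by simp [Fin.ext_iff]; omega)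
      · rfl
    · rw [wd_empty _ (by omega)]
      rfl

lemma cyc_map {n : ℕ} : ∀ k p m, m - p = k → (hpm : p ≤ m) → (hm : m < n) →
    wd (tsw n) p m ⟨p, by omega⟩ = ⟨m, hm⟩ := by
  intro k
  induction k with
  | zero =>
    intro p m hk hpm hm
    have : p = m := by omega
    subst this
    rw [wd_empty _ (le_refl _)]
    rfl
  | succ k ih =>
    intro p m hk hpm hm
    have hlt : p < m := by omega
    rw [wd_peel_bot _ hlt, Equiv.Perm.mul_apply]
    have h1 : tsw n p ⟨p, by omega⟩ = ⟨p + 1, by omega⟩ := by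
      rw [tsw, dif_pos (show p + 1 < n by omega)]
      exact Equiv.swap_apply_left _ _
    rw [h1]
    exact ih (p + 1) m (by omega) (by omega) hm

/-- The "support below `m`" predicate. -/
def Spp {n : ℕ} (m : ℕ) (π : Equiv.Perm (Fin n)) : Prop :=
  ∀ x : Fin n, m ≤ x.val → π x = x

lemma spp_top {n : ℕ} (π : Equiv.Perm (Fin n)) : Spp n π :=
  fun x hx => absurd x.isLt (by omega)

lemma spp_p_le {n m : ℕ} (hm : m < n) {π : Equiv.Perm (Fin n)} (hs : Spp (m + 1) π) :
    (π⁻¹ ⟨m, hm⟩).val ≤ m := by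
  by_contra hcon
  have h1 : π (π⁻¹ ⟨m, hm⟩) = π⁻¹ ⟨m, hm⟩ := hs _ (by omega)
  rw [show π (π⁻¹ ⟨m, hm⟩) = ⟨m, hm⟩ from π.apply_symm_apply _] at h1
  have := congrArg Fin.val h1
  simp at this hcon
  omega

lemma spp_next {n m : ℕ} (hm : m < n) {π : Equiv.Perm (Fin n)} (hs : Spp (m + 1) π) :
    Spp m (π * (wd (tsw n) ((π⁻¹ ⟨m, hm⟩).val) m)⁻¹) := by
  intro x hx
  rw [Equiv.Perm.mul_apply]
  rcases eq_or_lt_of_le hx with heq | hlt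
  · have hxm : x = ⟨m, hm⟩ := by simp [Fin.ext_iff]; omega
    subst hxm
    have h1 : (wd (tsw n) ((π⁻¹ ⟨m, hm⟩).val) m)⁻¹ ⟨m, hm⟩ = π⁻¹ ⟨m, hm⟩ := by
      rw [Equiv.Perm.inv_eq_iff_eq]
      have := cyc_map (k := m - (π⁻¹ ⟨m, hm⟩).val) ((π⁻¹ ⟨m, hm⟩).val) m rfl
        (spp_p_le hm hs) hm
      rw [Fin.eta] at this
      exact this.symm
    rw [h1]; exact π.apply_symm_apply _
  · have h1 : (wd (tsw n) ((π⁻¹ ⟨m, hm⟩).val) m)⁻¹ x = x := by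
      rw [Equiv.Perm.inv_eq_iff_eq]
      exact (cyc_out _ m x (Or.inr hlt)).symm
    rw [h1]
    exact hs x (by omega)

/-- The recursive normal-form map. -/
def FF {n : ℕ} (r : ℕ → G) : ℕ → Equiv.Perm (Fin n) → G
  | 0, _ => 1
  | m + 1, π =>
    if h : m < n then
      FF r m (π * (wd (tsw n) ((π⁻¹ ⟨m, h⟩).val) m)⁻¹) * wd r ((π⁻¹ ⟨m, h⟩).val) m
    else 1

lemma FF_one {n : ℕ} (r : ℕ → G) : ∀ m, m ≤ n → FF (n := n) r m 1 = 1 := by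
  intro m
  induction m with
  | zero => intro _; rfl
  | succ m ih =>
    intro hm
    rw [FF, dif_pos (show m < n by omega)]
    have hp : ((1 : Equiv.Perm (Fin n))⁻¹ ⟨m, by omega⟩).val = m := by simp
    rw [hp, wd_empty _ (le_refl m), wd_empty _ (le_refl m)]
    simpa using ih (by omega)

lemma FF_mul {n : ℕ} (r : ℕ → G) (hinv : ∀ j, r j * r j = 1)
    (hcomm : ∀ j k, j + 2 ≤ k → Commute (r j) (r k))
    (hbraid : ∀ j, j + 2 < n → r j * r (j + 1) * r j = r (j + 1) * r j * r (j + 1)) :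
    ∀ m, m ≤ n → ∀ π : Equiv.Perm (Fin n), Spp m π → ∀ j, j + 1 < m →
      FF r m (π * tsw n j) = FF r m π * r j := by
  intro m
  induction m with
  | zero => intro _ _ _ j hj; omega
  | succ m ih =>
    intro hm π hsupp j hj
    have hmn : m < n := by omega
    have hjn : j + 1 < n := by omega
    have hjm : j + 1 ≤ m := by omega
    -- the position of m
    obtain ⟨p, hplt, hfin⟩ : ∃ p : ℕ, ∃ h : p < n, π⁻¹ ⟨m, hmn⟩ = ⟨p, h⟩ :=
      ⟨_, (π⁻¹ ⟨m, hmn⟩).isLt, (Fin.eta _ _).symm⟩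
    have hp2 : (π⁻¹ ⟨m, hmn⟩).val = p := by rw [hfin]
    have hpm : p ≤ m := by have := spp_p_le hmn hsupp; omega
    -- position of m for π * tsw n j
    have hq : ((π * tsw n j)⁻¹ ⟨m, hmn⟩) = tsw n j ⟨p, hplt⟩ := by
      rw [mul_inv_rev, Equiv.Perm.mul_apply, tsw_inv, hfin]
    have hsupp' : Spp (m + 1) (π * tsw n j) := by
      intro x hx
      rw [Equiv.Perm.mul_apply]
      have htx : tsw n j x = x := by
        rw [tsw, dif_pos hjn]
        exact Equiv.swap_apply_of_ne_of_ne (by simp [Fin.ext_iff]; omega)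
          (by simp [Fin.ext_iff]; omega)
      rw [htx]
      exact hsupp x hx
    have hts : tsw n j = Equiv.swap ⟨j, by omega⟩ ⟨j + 1, hjn⟩ := by
      rw [tsw, dif_pos hjn]
    rw [FF, FF, dif_pos hmn, dif_pos hmn]
    rcases (show p = j ∨ p = j + 1 ∨ (j + 2 ≤ p ∧ p ≤ m) ∨ p < j by omega) with
      hc | hc | ⟨hc1, hc2⟩ | hc
    · -- p = j : new position is j + 1
      have hq2 : ((π * tsw n j)⁻¹ ⟨m, hmn⟩).val = j + 1 := by
        rw [hq, hts]
        have : (⟨p, hplt⟩ : Fin n) = ⟨j, by omega⟩ := by simp [Fin.ext_iff, hc]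
        rw [this, Equiv.swap_apply_left]
      rw [hp2, hq2]
      have harg : π * tsw n j * (wd (tsw n) (j + 1) m)⁻¹
          = π * (wd (tsw n) j m)⁻¹ := by
        rw [wd_peel_bot (tsw n) (show j < m by omega), mul_inv_rev, tsw_inv, ← mul_assoc]
      rw [harg, hc, wd_peel_bot r (show j < m by omega)]
      rw [mul_assoc, mul_assoc, hinv j, mul_one]
    · -- p = j + 1 : new position is j
      have hq2 : ((π * tsw n j)⁻¹ ⟨m, hmn⟩).val = j := by
        rw [hq, hts]
        have : (⟨p, hplt⟩ : Fin n) = ⟨j + 1, by omega⟩ := by simp [Fin.ext_iff, hc]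
        rw [this, Equiv.swap_apply_right]
      rw [hp2, hq2]
      have harg : π * tsw n j * (wd (tsw n) j m)⁻¹
          = π * (wd (tsw n) (j + 1) m)⁻¹ := by
        rw [wd_peel_bot (tsw n) (show j < m by omega), mul_inv_rev, tsw_inv, ← mul_assoc,
          mul_assoc π, tsw_mul_self, mul_one]
      rw [harg, hc, wd_peel_bot r (show j < m by omega)]
      rw [mul_assoc]
    · -- j + 2 ≤ p : positions unchanged, generator slides through
      have hq2 : ((π * tsw n j)⁻¹ ⟨m, hmn⟩).val = p := by
        rw [hq, hts, Equiv.swap_apply_of_ne_of_ne (by simp [Fin.ext_iff]; omega)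
          (by simp [Fin.ext_iff]; omega)]
      rw [hp2, hq2]
      have hcw : Commute (tsw n j) ((wd (tsw n) p m)⁻¹) :=
        (commute_wd_lo (tsw n) (tsw_comm n) hc1).inv_right
      have harg : π * tsw n j * (wd (tsw n) p m)⁻¹
          = π * (wd (tsw n) p m)⁻¹ * tsw n j := by
        rw [mul_assoc, hcw.eq, ← mul_assoc]
      rw [harg]
      have hnext := spp_next hmn hsupp
      rw [hp2] at hnext
      rw [ih (by omega) _ hnext j (by omega)]
      rw [mul_assoc, ((commute_wd_lo r hcomm hc1).eq : r j * wd r p m = wd r p m * r j),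
        ← mul_assoc]
    · -- p < j : generator index drops by one through the cycle
      have hj1 : 1 ≤ j := by omega
      have hq2 : ((π * tsw n j)⁻¹ ⟨m, hmn⟩).val = p := by
        rw [hq, hts, Equiv.swap_apply_of_ne_of_ne (by simp [Fin.ext_iff]; omega)
          (by simp [Fin.ext_iff]; omega)]
      rw [hp2, hq2]
      have hpush : tsw n (j - 1) * wd (tsw n) p m = wd (tsw n) p m * tsw n j := by
        have := wd_push (tsw n) (tsw_comm n)
          (t := j - 1) (a := p) (b := m)
          (tsw_braid n (j - 1) (by omega)) (by omega) (by omega)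
        rwa [show j - 1 + 1 = j by omega] at this
      have harg : π * tsw n j * (wd (tsw n) p m)⁻¹
          = π * (wd (tsw n) p m)⁻¹ * tsw n (j - 1) := by
        have h2 : tsw n j * (wd (tsw n) p m)⁻¹ = (wd (tsw n) p m)⁻¹ * tsw n (j - 1) := by
          rw [eq_comm, inv_mul_eq_iff_eq_mul, ← mul_assoc, ← hpush, mul_assoc,
            mul_inv_cancel, mul_one]
        rw [mul_assoc, h2, ← mul_assoc]
      rw [harg]
      have hnext := spp_next hmn hsupp
      rw [hp2] at hnext
      rw [ih (by omega) _ hnext (j - 1) (by omega)]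
      have hpushr : r (j - 1) * wd r p m = wd r p m * r j := by
        have := wd_push r hcomm (t := j - 1) (a := p) (b := m)
          (hbraid (j - 1) (by omega)) (by omega) (by omega)
        rwa [show j - 1 + 1 = j by omega] at this
      rw [mul_assoc, hpushr, ← mul_assoc]

lemma closure_tsw (n : ℕ) :
    Submonoid.closure {σ : Equiv.Perm (Fin n) | ∃ j, j + 1 < n ∧ σ = tsw n j} = ⊤ := by
  cases n with
  | zero =>
    rw [eq_top_iff]
    intro x _
    have hx : x = 1 := by
      apply Equiv.ext
      intro i
      exact i.elim0
    rw [hx]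
    exact Submonoid.one_mem _
  | succ m =>
    rw [eq_top_iff, ← Equiv.Perm.mclosure_swap_castSucc_succ m]
    apply Submonoid.closure_le.mpr
    rintro _ ⟨i, rfl⟩
    apply Submonoid.subset_closure
    refine ⟨i.val, by omega, ?_⟩
    rw [tsw, dif_pos (by omega : i.val + 1 < m + 1)]
    congr 1 <;> simp [Fin.ext_iff]

theorem exists_coxLift (n : ℕ) (r : ℕ → G) (hinv : ∀ j, r j * r j = 1)
    (hcomm : ∀ j k, j + 2 ≤ k → Commute (r j) (r k))
    (hbraid : ∀ j, j + 2 < n → r j * r (j + 1) * r j = r (j + 1) * r j * r (j + 1)) :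
    ∃ f : Equiv.Perm (Fin n) →* G,
      ∀ j (h : j + 1 < n), f (Equiv.swap ⟨j, by omega⟩ ⟨j + 1, h⟩) = r j := by
  have key : ∀ π : Equiv.Perm (Fin n), ∀ j, j + 1 < n →
      FF r n (π * tsw n j) = FF r n π * r j :=
    fun π j hj => FF_mul r hinv hcomm hbraid n le_rfl π (spp_top π) j hj
  have h1 : FF (n := n) r n 1 = 1 := FF_one r n le_rfl
  have htsw : ∀ j, j + 1 < n → FF r n (tsw n j) = r j := by
    intro j hj
    have := key 1 j hj
    rwa [one_mul, h1, one_mul] at this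
  have hmul' : ∀ b ∈ Submonoid.closure {σ : Equiv.Perm (Fin n) | ∃ j, j + 1 < n ∧ σ = tsw n j},
      ∀ a, FF r n (a * b) = FF r n a * FF r n b := by
    intro b hb
    induction hb using Submonoid.closure_induction with
    | mem σ hσ =>
      obtain ⟨j, hj, rfl⟩ := hσ
      intro a
      rw [key a j hj, htsw j hj]
    | one =>
      intro a
      rw [mul_one, h1, mul_one]
    | mul σ τ hσ hτ ihσ ihτ =>
      intro a
      rw [← mul_assoc, ihτ, ihσ, ihτ σ, mul_assoc]
  have hmul : ∀ a b : Equiv.Perm (Fin n), FF r n (a * b) = FF r n a * FF r n b := by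
    intro a b
    exact hmul' b (by rw [closure_tsw n]; exact Submonoid.mem_top b) a
  refine ⟨MonoidHom.mk' (FF r n) hmul, ?_⟩
  intro j h
  have hts : Equiv.swap (⟨j, by omega⟩ : Fin n) ⟨j + 1, h⟩ = tsw n j := by
    rw [tsw, dif_pos h]
  show FF r n _ = r j
  rw [hts]
  exact htsw j h

section BaseCalc
variable {G : Type*} [Group G] {a b s' : G}

lemma cox_abab (ha : a * a = 1) (hb : b * b = 1) (hbr : a * b * a = b * a * b) :
    a * b * (a * b) = b * a := by
  calc a * b * (a * b) = (a * b * a) * b := by group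
    _ = b * a * (b * b) := by rw [hbr]; group
    _ = b * a := by rw [hb, mul_one]

lemma cox_ababa (ha : a * a = 1) (hb : b * b = 1) (hbr : a * b * a = b * a * b) :
    a * b * a * b * a = b := by
  calc a * b * a * b * a = (a * b * (a * b)) * a := by group
    _ = b * (a * a) := by rw [cox_abab ha hb hbr]; group
    _ = b := by rw [ha, mul_one]

lemma cox_base1 (ha : a * a = 1) (hb : b * b = 1) (hbr : a * b * a = b * a * b) :
    a * b * (a * (b * a * s'⁻¹ * (a * b))) * (b * a) = b * s'⁻¹ := by
  have haa : ∀ x : G, a * (a * x) = x := fun x => by rw [← mul_assoc, ha, one_mul]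
  have hbb : ∀ x : G, b * (b * x) = x := fun x => by rw [← mul_assoc, hb, one_mul]
  have h5 : ∀ x : G, a * (b * (a * (b * (a * x)))) = b * x := fun x => by
    rw [show a * (b * (a * (b * (a * x)))) = (a * b * a * b * a) * x by group,
      cox_ababa ha hb hbr]
  calc a * b * (a * (b * a * s'⁻¹ * (a * b))) * (b * a)
      = a * (b * (a * (b * (a * (s'⁻¹ * (a * (b * (b * a)))))))) := by group
    _ = a * (b * (a * (b * (a * (s'⁻¹ * (a * a)))))) := by rw [hbb]
    _ = a * (b * (a * (b * (a * (s'⁻¹ * 1))))) := by rw [ha]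
    _ = a * (b * (a * (b * (a * s'⁻¹)))) := by rw [mul_one]
    _ = b * s'⁻¹ := h5 s'⁻¹

lemma cox_base2 (ha : a * a = 1) (hb : b * b = 1) (hbr : a * b * a = b * a * b) :
    a * b * (b * a * s'⁻¹ * (a * b) * a) * (b * a) = s'⁻¹ * b := by
  have haa : ∀ x : G, a * (a * x) = x := fun x => by rw [← mul_assoc, ha, one_mul]
  have hbb : ∀ x : G, b * (b * x) = x := fun x => by rw [← mul_assoc, hb, one_mul]
  calc a * b * (b * a * s'⁻¹ * (a * b) * a) * (b * a)
      = a * (b * (b * (a * (s'⁻¹ * (a * (b * (a * (b * a)))))))) := by group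
    _ = a * (a * (s'⁻¹ * (a * (b * (a * (b * a)))))) := by rw [hbb]
    _ = s'⁻¹ * (a * (b * (a * (b * a)))) := by rw [haa]
    _ = s'⁻¹ * (a * b * a * b * a) := by group
    _ = s'⁻¹ * b := by rw [cox_ababa ha hb hbr]

lemma cox_base3 (ha : a * a = 1) (hb : b * b = 1) (hbr : a * b * a = b * a * b) :
    a * (b * s'⁻¹) * a = b * (a * (b * a * s'⁻¹ * (a * b))) * b := by
  have hbb : ∀ x : G, b * (b * x) = x := fun x => by rw [← mul_assoc, hb, one_mul]
  have hbr' : b * a * b = a * b * a := hbr.symm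
  have h4' : ∀ x : G, b * (a * (b * (a * x))) = a * (b * x) := fun x => by
    rw [show b * (a * (b * (a * x))) = (b * a * (b * a)) * x by group,
      cox_abab hb ha hbr', mul_assoc]
  symm
  calc b * (a * (b * a * s'⁻¹ * (a * b))) * b
      = b * (a * (b * (a * (s'⁻¹ * (a * (b * b)))))) := by group
    _ = b * (a * (b * (a * (s'⁻¹ * (a * 1))))) := by rw [hb]
    _ = b * (a * (b * (a * (s'⁻¹ * a)))) := by rw [mul_one]
    _ = a * (b * (s'⁻¹ * a)) := h4' _
    _ = a * (b * s'⁻¹) * a := by group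

lemma cox_base4 (ha : a * a = 1) (hb : b * b = 1) (hbr : a * b * a = b * a * b) :
    a * (s'⁻¹ * b) * a = b * (b * a * s'⁻¹ * (a * b) * a) * b := by
  have hbb : ∀ x : G, b * (b * x) = x := fun x => by rw [← mul_assoc, hb, one_mul]
  have h4 : a * (b * (a * b)) = b * a := by
    rw [show a * (b * (a * b)) = a * b * (a * b) by group, cox_abab ha hb hbr]
  symm
  calc b * (b * a * s'⁻¹ * (a * b) * a) * b
      = b * (b * (a * (s'⁻¹ * (a * (b * (a * b)))))) := by group
    _ = a * (s'⁻¹ * (a * (b * (a * b)))) := by rw [hbb]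
    _ = a * (s'⁻¹ * (b * a)) := by rw [h4]
    _ = a * (s'⁻¹ * b) * a := by group

end BaseCalc

namespace UVB
open UVBGen

variable {n : ℕ}

lemma mk_rel {r : FreeGroup (UVBGen n)} (h : r ∈ uvbRels n) :
    PresentedGroup.mk (uvbRels n) r = 1 :=
  (QuotientGroup.eq_one_iff _).mpr (Subgroup.subset_normalClosure h)

lemma rho_mul_self (k : ℕ) : rho n k * rho n k = 1 := by
  by_cases h : 1 ≤ k ∧ k ≤ n - 1
  · rw [rho, dif_pos h]
    have hmem : (rg ⟨k - 1, by omega⟩ * rg ⟨k - 1, by omega⟩ : FreeGroup (UVBGen n))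
        ∈ uvbRels n := Or.inr (Or.inr ⟨⟨k - 1, by omega⟩, rfl⟩)
    have hrel := mk_rel hmem
    rw [map_mul] at hrel
    exact hrel
  · rw [rho, dif_neg h]
    simp

lemma rho_inv (k : ℕ) : (rho n k)⁻¹ = rho n k :=
  inv_eq_of_mul_eq_one_right (rho_mul_self k)

lemma braid_rho {k : ℕ} (h1 : 1 ≤ k) (h2 : k + 1 ≤ n - 1) :
    rho n k * rho n (k + 1) * rho n k = rho n (k + 1) * rho n k * rho n (k + 1) := by
  rw [rho, rho, dif_pos ⟨h1, by omega⟩, dif_pos ⟨by omega, h2⟩]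
  have hmem : (rg ⟨k - 1, by omega⟩ * rg ⟨k + 1 - 1, by omega⟩ * rg ⟨k - 1, by omega⟩ *
      (rg ⟨k + 1 - 1, by omega⟩ * rg ⟨k - 1, by omega⟩ * rg ⟨k + 1 - 1, by omega⟩)⁻¹ :
        FreeGroup (UVBGen n)) ∈ uvbRels n :=
    Or.inl ⟨⟨k - 1, by omega⟩, ⟨k + 1 - 1, by omega⟩,
      show k + 1 - 1 = k - 1 + 1 by omega, Or.inr (Or.inl rfl)⟩
  have hrel := mk_rel hmem
  simp only [map_mul, map_inv] at hrel
  exact mul_inv_eq_one.mp hrel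

lemma rel3 {k : ℕ} (h1 : 1 ≤ k) (h2 : k + 1 ≤ n - 1) :
    rho n k * rho n (k + 1) * sigma n k = sigma n (k + 1) * rho n k * rho n (k + 1) := by
  rw [rho, rho, sigma, sigma, dif_pos ⟨h1, by omega⟩, dif_pos ⟨by omega, h2⟩,
    dif_pos ⟨h1, by omega⟩, dif_pos ⟨by omega, h2⟩]
  have hmem : (rg ⟨k - 1, by omega⟩ * rg ⟨k + 1 - 1, by omega⟩ * sg ⟨k - 1, by omega⟩ *
      (sg ⟨k + 1 - 1, by omega⟩ * rg ⟨k - 1, by omega⟩ * rg ⟨k + 1 - 1, by omega⟩)⁻¹ :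
        FreeGroup (UVBGen n)) ∈ uvbRels n :=
    Or.inl ⟨⟨k - 1, by omega⟩, ⟨k + 1 - 1, by omega⟩,
      show k + 1 - 1 = k - 1 + 1 by omega, Or.inr (Or.inr (Or.inl rfl))⟩
  have hrel := mk_rel hmem
  simp only [map_mul, map_inv] at hrel
  exact mul_inv_eq_one.mp hrel

lemma comm_rho_rho (k l : ℕ) (h : k + 2 ≤ l) : Commute (rho n k) (rho n l) := by
  by_cases hk : 1 ≤ k ∧ k ≤ n - 1
  · by_cases hl : 1 ≤ l ∧ l ≤ n - 1
    · rw [rho, rho, dif_pos hk, dif_pos hl]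
      have hmem : (rg ⟨k - 1, by omega⟩ * rg ⟨l - 1, by omega⟩ *
          (rg ⟨l - 1, by omega⟩ * rg ⟨k - 1, by omega⟩)⁻¹ :
            FreeGroup (UVBGen n)) ∈ uvbRels n :=
        Or.inr (Or.inl ⟨⟨k - 1, by omega⟩, ⟨l - 1, by omega⟩,
          Or.inl (show k - 1 + 2 ≤ l - 1 by omega), Or.inr (Or.inl rfl)⟩)
      have hrel := mk_rel hmem
      simp only [map_mul, map_inv] at hrel
      exact mul_inv_eq_one.mp hrel
    · have hl1 : rho n l = 1 := by rw [rho, dif_neg hl]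
      rw [hl1]
      exact Commute.one_right _
  · have hk1 : rho n k = 1 := by rw [rho, dif_neg hk]
    rw [hk1]
    exact Commute.one_left _

lemma comm_sigma_rho (k l : ℕ) (h : k + 2 ≤ l ∨ l + 2 ≤ k) :
    Commute (sigma n k) (rho n l) := by
  by_cases hk : 1 ≤ k ∧ k ≤ n - 1
  · by_cases hl : 1 ≤ l ∧ l ≤ n - 1
    · rw [sigma, rho, dif_pos hk, dif_pos hl]
      have hmem : (sg ⟨k - 1, by omega⟩ * rg ⟨l - 1, by omega⟩ *
          (rg ⟨l - 1, by omega⟩ * sg ⟨k - 1, by omega⟩)⁻¹ :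
            FreeGroup (UVBGen n)) ∈ uvbRels n :=
        Or.inr (Or.inl ⟨⟨k - 1, by omega⟩, ⟨l - 1, by omega⟩, by
          rcases h with h | h
          · exact Or.inl (show k - 1 + 2 ≤ l - 1 by omega)
          · exact Or.inr (show l - 1 + 2 ≤ k - 1 by omega),
          Or.inr (Or.inr rfl)⟩)
      have hrel := mk_rel hmem
      simp only [map_mul, map_inv] at hrel
      exact mul_inv_eq_one.mp hrel
    · have hl1 : rho n l = 1 := by rw [rho, dif_neg hl]
      rw [hl1]
      exact Commute.one_right _
  · have hk1 : sigma n k = 1 := by rw [sigma, dif_neg hk]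
    rw [hk1]
    exact Commute.one_left _

end UVB

section ConjHelpers
variable {G : Type*} [Group G]

lemma sandwich {g W c : G} (hg : g * g = 1) :
    g * (g * W * c * (W⁻¹ * g)) * g = W * c * W⁻¹ := by
  calc g * (g * W * c * (W⁻¹ * g)) * g
      = (g * g) * (W * c * W⁻¹) * (g * g) := by group
    _ = W * c * W⁻¹ := by rw [hg, one_mul, mul_one]

lemma conj_commute {g W c c' : G} (hW : Commute g W) (hbase : g * c * g = c') :
    g * (W * c * W⁻¹) * g = W * c' * W⁻¹ := by
  rw [← hbase]
  calc g * (W * c * W⁻¹) * g = (g * W) * c * (W⁻¹ * g) := by group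
    _ = (W * g) * c * (g * W⁻¹) := by rw [hW.eq, ← hW.inv_right.eq]
    _ = W * (g * c * g) * W⁻¹ := by group

lemma conj_commute2 {g h W c c' : G} (hgW : Commute g W)
    (hbase : g * h * c * (h * g) = c') (hinvh : h⁻¹ = h) :
    g * (W * h * c * (W * h)⁻¹) * g = W * c' * W⁻¹ := by
  rw [← hbase, mul_inv_rev, hinvh]
  calc g * (W * h * c * (h * W⁻¹)) * g
      = (g * W) * (h * c * h) * (W⁻¹ * g) := by group
    _ = (W * g) * (h * c * h) * (g * W⁻¹) := by rw [hgW.eq, ← hgW.inv_right.eq]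
    _ = W * (g * h * c * (h * g)) * W⁻¹ := by group

end ConjHelpers

/-- The effect of the transposition `(k, k+1)` (1-based) on an index. -/
def swN (k x : ℕ) : ℕ := if x = k then k + 1 else if x = k + 1 then k else x

namespace UVB
variable {n : ℕ}

lemma sigma_inv {k : ℕ} (h1 : 1 ≤ k) (h2 : k + 1 ≤ n - 1) :
    (sigma n k)⁻¹
      = rho n (k + 1) * rho n k * (sigma n (k + 1))⁻¹ * (rho n k * rho n (k + 1)) := by
  have h3 := rel3 h1 h2
  have hs : sigma n k
      = rho n (k + 1) * rho n k * (sigma n (k + 1) * rho n k * rho n (k + 1)) := by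
    rw [← h3]
    rw [show rho n (k + 1) * rho n k * (rho n k * rho n (k + 1) * sigma n k)
        = rho n (k + 1) * (rho n k * rho n k) * rho n (k + 1) * sigma n k by group,
      rho_mul_self, mul_one]
    rw [show rho n (k + 1) * rho n (k + 1) * sigma n k
        = rho n (k + 1) * rho n (k + 1) * sigma n k by rfl]
    rw [show (rho n (k + 1) : UVB n) * rho n (k + 1) * sigma n k
        = (rho n (k + 1) * rho n (k + 1)) * sigma n k by group, rho_mul_self, one_mul]
  rw [hs]
  simp only [mul_inv_rev, rho_inv]
  group

lemma ub1 {k : ℕ} (h1 : 1 ≤ k) (h2 : k + 1 ≤ n - 1) :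
    rho n k * rho n (k + 1) * (rho n k * (sigma n k)⁻¹) * (rho n (k + 1) * rho n k)
      = rho n (k + 1) * (sigma n (k + 1))⁻¹ := by
  rw [sigma_inv h1 h2]
  exact cox_base1 (rho_mul_self k) (rho_mul_self (k + 1)) (braid_rho h1 h2)

lemma ub2 {k : ℕ} (h1 : 1 ≤ k) (h2 : k + 1 ≤ n - 1) :
    rho n k * rho n (k + 1) * ((sigma n k)⁻¹ * rho n k) * (rho n (k + 1) * rho n k)
      = (sigma n (k + 1))⁻¹ * rho n (k + 1) := by
  rw [sigma_inv h1 h2]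
  exact cox_base2 (rho_mul_self k) (rho_mul_self (k + 1)) (braid_rho h1 h2)

lemma ub3 {k : ℕ} (h1 : 1 ≤ k) (h2 : k + 1 ≤ n - 1) :
    rho n k * (rho n (k + 1) * (sigma n (k + 1))⁻¹) * rho n k
      = rho n (k + 1) * (rho n k * (sigma n k)⁻¹) * rho n (k + 1) := by
  rw [sigma_inv h1 h2]
  exact cox_base3 (rho_mul_self k) (rho_mul_self (k + 1)) (braid_rho h1 h2)

lemma ub4 {k : ℕ} (h1 : 1 ≤ k) (h2 : k + 1 ≤ n - 1) :
    rho n k * ((sigma n (k + 1))⁻¹ * rho n (k + 1)) * rho n k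
      = rho n (k + 1) * ((sigma n k)⁻¹ * rho n k) * rho n (k + 1) := by
  rw [sigma_inv h1 h2]
  exact cox_base4 (rho_mul_self k) (rho_mul_self (k + 1)) (braid_rho h1 h2)

lemma lam_pos {i j : ℕ} (h : i < j) :
    lam n i j = wd (rho n) (i + 1) j * (rho n i * (sigma n i)⁻¹) *
      (wd (rho n) (i + 1) j)⁻¹ := by
  have e : j - 1 - i = j - (i + 1) := by omega
  have h1 : ((List.range' (i + 1) (j - 1 - i)).reverse.map (rho n)).prod
      = wd (rho n) (i + 1) j := by rw [wd, e]
  have h2 : ((List.range' (i + 1) (j - 1 - i)).map (rho n)).prod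
      = (wd (rho n) (i + 1) j)⁻¹ := by
    rw [wd_inv (rho n) rho_mul_self, wu, e]
  rw [lam, if_pos h, h1, h2]

lemma lam_neg {i j : ℕ} (h : j < i) :
    lam n i j = wd (rho n) (j + 1) i * ((sigma n j)⁻¹ * rho n j) *
      (wd (rho n) (j + 1) i)⁻¹ := by
  have e : i - 1 - j = i - (j + 1) := by omega
  have h1 : ((List.range' (j + 1) (i - 1 - j)).reverse.map (rho n)).prod
      = wd (rho n) (j + 1) i := by rw [wd, e]
  have h2 : ((List.range' (j + 1) (i - 1 - j)).map (rho n)).prod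
      = (wd (rho n) (j + 1) i)⁻¹ := by
    rw [wd_inv (rho n) rho_mul_self, wu, e]
  rw [lam, if_neg (by omega), if_pos h, h1, h2]

end UVB

namespace UVB
variable {n : ℕ}

lemma rho_comm_center_lo {k i : ℕ} (hk : k + 2 ≤ i) :
    Commute (rho n k) (rho n i * (sigma n i)⁻¹) :=
  (comm_rho_rho k i (by omega)).mul_right
    ((comm_sigma_rho i k (Or.inr (by omega))).symm.inv_right)

lemma rho_comm_center_hi {k i : ℕ} (hk : i + 2 ≤ k) :
    Commute (rho n k) (rho n i * (sigma n i)⁻¹) :=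
  ((comm_rho_rho i k (by omega)).symm).mul_right
    ((comm_sigma_rho i k (Or.inl (by omega))).symm.inv_right)

lemma rho_comm_centerneg_lo {k i : ℕ} (hk : k + 2 ≤ i) :
    Commute (rho n k) ((sigma n i)⁻¹ * rho n i) :=
  ((comm_sigma_rho i k (Or.inr (by omega))).symm.inv_right).mul_right
    (comm_rho_rho k i (by omega))

lemma rho_comm_centerneg_hi {k i : ℕ} (hk : i + 2 ≤ k) :
    Commute (rho n k) ((sigma n i)⁻¹ * rho n i) :=
  ((comm_sigma_rho i k (Or.inl (by omega))).symm.inv_right).mul_right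
    ((comm_rho_rho i k (by omega)).symm)

lemma conj_by_commute {g x : UVB n} (hg : g * g = 1) (hc : Commute g x) :
    g * x * g = x := by
  rw [hc.eq, mul_assoc, hg, mul_one]

/-- Conjugating `λ_{i,j}` (for `i < j`) by `ρ_k` permutes the indices. -/
lemma conj_lam_pos {k i j : ℕ} (hk1 : 1 ≤ k) (hk2 : k ≤ n - 1)
    (hi1 : 1 ≤ i) (hij : i < j) (hj2 : j ≤ n) :
    rho n k * lam n i j * rho n k = lam n (swN k i) (swN k j) := by
  rcases (show k + 2 ≤ i ∨ k + 1 = i ∨ (k = i ∧ j = i + 1) ∨ (k = i ∧ i + 1 < j)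
      ∨ (i + 1 ≤ k ∧ k + 2 ≤ j) ∨ (k + 1 = j ∧ i + 1 < j) ∨ k = j ∨ j + 1 ≤ k
      by omega) with
    hc | hc | ⟨hc, hc2⟩ | ⟨hc, hc2⟩ | ⟨hc, hc2⟩ | ⟨hc, hc2⟩ | hc | hc
  · -- (A) k + 2 ≤ i : everything commutes
    have e1 : swN k i = i := by unfold swN; rw [if_neg (by omega), if_neg (by omega)]
    have e2 : swN k j = j := by unfold swN; rw [if_neg (by omega), if_neg (by omega)]
    rw [e1, e2, lam_pos hij]
    exact conj_by_commute (rho_mul_self k)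
      (((commute_wd_lo (rho n) comm_rho_rho (by omega)).mul_right
        (rho_comm_center_lo hc)).mul_right
        (commute_wd_lo (rho n) comm_rho_rho (by omega)).inv_right)
  · -- (B) k + 1 = i
    obtain rfl : i = k + 1 := hc.symm
    have e1 : swN k (k + 1) = k := by unfold swN; rw [if_neg (by omega), if_pos rfl]
    have e2 : swN k j = j := by unfold swN; rw [if_neg (by omega), if_neg (by omega)]
    have cW : Commute (rho n k) (wd (rho n) (k + 1 + 1) j) :=
      commute_wd_lo (rho n) comm_rho_rho (by omega)
    rw [e1, e2, lam_pos hij, lam_pos (show k < j by omega),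
      wd_peel_bot (rho n) (show k + 1 < j by omega)]
    rw [conj_commute cW (ub3 hk1 (by omega))]
    rw [mul_inv_rev, rho_inv]
    group
  · -- (C) k = i, j = i + 1
    subst hc
    subst hc2
    have e1 : swN k k = k + 1 := by unfold swN; rw [if_pos rfl]
    have e2 : swN k (k + 1) = k := by unfold swN; rw [if_neg (by omega), if_pos rfl]
    rw [e1, e2, lam_pos (show k < k + 1 by omega), lam_neg (show k < k + 1 by omega),
      wd_empty _ le_rfl]
    simp only [one_mul, inv_one, mul_one]
    rw [show rho n k * (rho n k * (sigma n k)⁻¹) * rho n k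
        = (rho n k * rho n k) * ((sigma n k)⁻¹ * rho n k) by group, rho_mul_self, one_mul]
  · -- (D) k = i, i + 1 < j
    subst hc
    have e1 : swN k k = k + 1 := by unfold swN; rw [if_pos rfl]
    have e2 : swN k j = j := by unfold swN; rw [if_neg (by omega), if_neg (by omega)]
    have cW : Commute (rho n k) (wd (rho n) (k + 1 + 1) j) :=
      commute_wd_lo (rho n) comm_rho_rho (by omega)
    rw [e1, e2, lam_pos hij, lam_pos (show k + 1 < j by omega),
      wd_peel_bot (rho n) (show k + 1 < j by omega)]
    exact conj_commute2 cW (ub1 hk1 (by omega)) (rho_inv (k + 1))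
  · -- (E) interior : i + 1 ≤ k ≤ j - 2
    have e1 : swN k i = i := by unfold swN; rw [if_neg (by omega), if_neg (by omega)]
    have e2 : swN k j = j := by unfold swN; rw [if_neg (by omega), if_neg (by omega)]
    rw [e1, e2, lam_pos hij]
    have hpush : rho n k * wd (rho n) (i + 1) j = wd (rho n) (i + 1) j * rho n (k + 1) :=
      wd_push (rho n) comm_rho_rho (braid_rho hk1 (by omega)) (by omega) hc2
    have hpush' : rho n (k + 1) * (wd (rho n) (i + 1) j)⁻¹
        = (wd (rho n) (i + 1) j)⁻¹ * rho n k := by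
      calc rho n (k + 1) * (wd (rho n) (i + 1) j)⁻¹
          = (wd (rho n) (i + 1) j)⁻¹ * (wd (rho n) (i + 1) j * rho n (k + 1)) *
            (wd (rho n) (i + 1) j)⁻¹ := by group
        _ = (wd (rho n) (i + 1) j)⁻¹ * (rho n k * wd (rho n) (i + 1) j) *
            (wd (rho n) (i + 1) j)⁻¹ := by rw [hpush]
        _ = (wd (rho n) (i + 1) j)⁻¹ * rho n k := by group
    have hcc : rho n (k + 1) * (rho n i * (sigma n i)⁻¹) * rho n (k + 1)
        = rho n i * (sigma n i)⁻¹ :=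
      conj_by_commute (rho_mul_self (k + 1)) (rho_comm_center_hi (by omega))
    calc rho n k * (wd (rho n) (i + 1) j * (rho n i * (sigma n i)⁻¹) *
          (wd (rho n) (i + 1) j)⁻¹) * rho n k
        = (rho n k * wd (rho n) (i + 1) j) * (rho n i * (sigma n i)⁻¹) *
          ((wd (rho n) (i + 1) j)⁻¹ * rho n k) := by group
      _ = (wd (rho n) (i + 1) j * rho n (k + 1)) * (rho n i * (sigma n i)⁻¹) *
          (rho n (k + 1) * (wd (rho n) (i + 1) j)⁻¹) := by rw [hpush, hpush']
      _ = wd (rho n) (i + 1) j * (rho n (k + 1) * (rho n i * (sigma n i)⁻¹) *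
          rho n (k + 1)) * (wd (rho n) (i + 1) j)⁻¹ := by group
      _ = wd (rho n) (i + 1) j * (rho n i * (sigma n i)⁻¹) *
          (wd (rho n) (i + 1) j)⁻¹ := by rw [hcc]
  · -- (F) k + 1 = j, i + 1 < j
    obtain rfl : j = k + 1 := hc.symm
    have e1 : swN k i = i := by unfold swN; rw [if_neg (by omega), if_neg (by omega)]
    have e2 : swN k (k + 1) = k := by unfold swN; rw [if_neg (by omega), if_pos rfl]
    rw [e1, e2, lam_pos hij, lam_pos (show i < k by omega),
      wd_peel_top (rho n) (show i + 1 ≤ k by omega), mul_inv_rev, rho_inv]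
    exact sandwich (rho_mul_self k)
  · -- (G) k = j
    subst hc
    have e1 : swN k i = i := by unfold swN; rw [if_neg (by omega), if_neg (by omega)]
    have e2 : swN k k = k + 1 := by unfold swN; rw [if_pos rfl]
    rw [e1, e2, lam_pos hij, lam_pos (show i < k + 1 by omega),
      wd_peel_top (rho n) (show i + 1 ≤ k by omega), mul_inv_rev, rho_inv]
    group
  · -- (H) j + 1 ≤ k
    have e1 : swN k i = i := by unfold swN; rw [if_neg (by omega), if_neg (by omega)]
    have e2 : swN k j = j := by unfold swN; rw [if_neg (by omega), if_neg (by omega)]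
    rw [e1, e2, lam_pos hij]
    exact conj_by_commute (rho_mul_self k)
      (((commute_wd_hi (rho n) comm_rho_rho (by omega)).mul_right
        (rho_comm_center_hi (by omega))).mul_right
        (commute_wd_hi (rho n) comm_rho_rho (by omega)).inv_right)

/-- Conjugating `λ_{j,i}` (for `i < j`) by `ρ_k` permutes the indices. -/
lemma conj_lam_neg {k i j : ℕ} (hk1 : 1 ≤ k) (hk2 : k ≤ n - 1)
    (hi1 : 1 ≤ i) (hij : i < j) (hj2 : j ≤ n) :
    rho n k * lam n j i * rho n k = lam n (swN k j) (swN k i) := by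
  rcases (show k + 2 ≤ i ∨ k + 1 = i ∨ (k = i ∧ j = i + 1) ∨ (k = i ∧ i + 1 < j)
      ∨ (i + 1 ≤ k ∧ k + 2 ≤ j) ∨ (k + 1 = j ∧ i + 1 < j) ∨ k = j ∨ j + 1 ≤ k
      by omega) with
    hc | hc | ⟨hc, hc2⟩ | ⟨hc, hc2⟩ | ⟨hc, hc2⟩ | ⟨hc, hc2⟩ | hc | hc
  · -- (A)
    have e1 : swN k i = i := by unfold swN; rw [if_neg (by omega), if_neg (by omega)]
    have e2 : swN k j = j := by unfold swN; rw [if_neg (by omega), if_neg (by omega)]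
    rw [e1, e2, lam_neg hij]
    exact conj_by_commute (rho_mul_self k)
      (((commute_wd_lo (rho n) comm_rho_rho (by omega)).mul_right
        (rho_comm_centerneg_lo hc)).mul_right
        (commute_wd_lo (rho n) comm_rho_rho (by omega)).inv_right)
  · -- (B) k + 1 = i : λ_{j,k+1} ↦ λ_{j,k}
    obtain rfl : i = k + 1 := hc.symm
    have e1 : swN k (k + 1) = k := by unfold swN; rw [if_neg (by omega), if_pos rfl]
    have e2 : swN k j = j := by unfold swN; rw [if_neg (by omega), if_neg (by omega)]
    have cW : Commute (rho n k) (wd (rho n) (k + 1 + 1) j) :=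
      commute_wd_lo (rho n) comm_rho_rho (by omega)
    rw [e1, e2, lam_neg hij, lam_neg (show k < j by omega),
      wd_peel_bot (rho n) (show k + 1 < j by omega)]
    rw [conj_commute cW (ub4 hk1 (by omega))]
    rw [mul_inv_rev, rho_inv]
    group
  · -- (C) k = i, j = i + 1
    subst hc
    subst hc2
    have e1 : swN k k = k + 1 := by unfold swN; rw [if_pos rfl]
    have e2 : swN k (k + 1) = k := by unfold swN; rw [if_neg (by omega), if_pos rfl]
    rw [e1, e2, lam_neg (show k < k + 1 by omega), lam_pos (show k < k + 1 by omega),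
      wd_empty _ le_rfl]
    simp only [one_mul, inv_one, mul_one]
    rw [show rho n k * ((sigma n k)⁻¹ * rho n k) * rho n k
        = rho n k * (sigma n k)⁻¹ * (rho n k * rho n k) by group, rho_mul_self, mul_one]
  · -- (D) k = i, i + 1 < j : λ_{j,k} ↦ λ_{j,k+1}
    subst hc
    have e1 : swN k k = k + 1 := by unfold swN; rw [if_pos rfl]
    have e2 : swN k j = j := by unfold swN; rw [if_neg (by omega), if_neg (by omega)]
    have cW : Commute (rho n k) (wd (rho n) (k + 1 + 1) j) :=
      commute_wd_lo (rho n) comm_rho_rho (by omega)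
    rw [e1, e2, lam_neg hij, lam_neg (show k + 1 < j by omega),
      wd_peel_bot (rho n) (show k + 1 < j by omega)]
    exact conj_commute2 cW (ub2 hk1 (by omega)) (rho_inv (k + 1))
  · -- (E) interior
    have e1 : swN k i = i := by unfold swN; rw [if_neg (by omega), if_neg (by omega)]
    have e2 : swN k j = j := by unfold swN; rw [if_neg (by omega), if_neg (by omega)]
    rw [e1, e2, lam_neg hij]
    have hpush : rho n k * wd (rho n) (i + 1) j = wd (rho n) (i + 1) j * rho n (k + 1) :=
      wd_push (rho n) comm_rho_rho (braid_rho hk1 (by omega)) (by omega) hc2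
    have hpush' : rho n (k + 1) * (wd (rho n) (i + 1) j)⁻¹
        = (wd (rho n) (i + 1) j)⁻¹ * rho n k := by
      calc rho n (k + 1) * (wd (rho n) (i + 1) j)⁻¹
          = (wd (rho n) (i + 1) j)⁻¹ * (wd (rho n) (i + 1) j * rho n (k + 1)) *
            (wd (rho n) (i + 1) j)⁻¹ := by group
        _ = (wd (rho n) (i + 1) j)⁻¹ * (rho n k * wd (rho n) (i + 1) j) *
            (wd (rho n) (i + 1) j)⁻¹ := by rw [hpush]
        _ = (wd (rho n) (i + 1) j)⁻¹ * rho n k := by group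
    have hcc : rho n (k + 1) * ((sigma n i)⁻¹ * rho n i) * rho n (k + 1)
        = (sigma n i)⁻¹ * rho n i :=
      conj_by_commute (rho_mul_self (k + 1)) (rho_comm_centerneg_hi (by omega))
    calc rho n k * (wd (rho n) (i + 1) j * ((sigma n i)⁻¹ * rho n i) *
          (wd (rho n) (i + 1) j)⁻¹) * rho n k
        = (rho n k * wd (rho n) (i + 1) j) * ((sigma n i)⁻¹ * rho n i) *
          ((wd (rho n) (i + 1) j)⁻¹ * rho n k) := by group
      _ = (wd (rho n) (i + 1) j * rho n (k + 1)) * ((sigma n i)⁻¹ * rho n i) *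
          (rho n (k + 1) * (wd (rho n) (i + 1) j)⁻¹) := by rw [hpush, hpush']
      _ = wd (rho n) (i + 1) j * (rho n (k + 1) * ((sigma n i)⁻¹ * rho n i) *
          rho n (k + 1)) * (wd (rho n) (i + 1) j)⁻¹ := by group
      _ = wd (rho n) (i + 1) j * ((sigma n i)⁻¹ * rho n i) *
          (wd (rho n) (i + 1) j)⁻¹ := by rw [hcc]
  · -- (F) k + 1 = j
    obtain rfl : j = k + 1 := hc.symm
    have e1 : swN k i = i := by unfold swN; rw [if_neg (by omega), if_neg (by omega)]
    have e2 : swN k (k + 1) = k := by unfold swN; rw [if_neg (by omega), if_pos rfl]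
    rw [e1, e2, lam_neg hij, lam_neg (show i < k by omega),
      wd_peel_top (rho n) (show i + 1 ≤ k by omega), mul_inv_rev, rho_inv]
    exact sandwich (rho_mul_self k)
  · -- (G) k = j
    subst hc
    have e1 : swN k i = i := by unfold swN; rw [if_neg (by omega), if_neg (by omega)]
    have e2 : swN k k = k + 1 := by unfold swN; rw [if_pos rfl]
    rw [e1, e2, lam_neg hij, lam_neg (show i < k + 1 by omega),
      wd_peel_top (rho n) (show i + 1 ≤ k by omega), mul_inv_rev, rho_inv]
    group
  · -- (H)
    have e1 : swN k i = i := by unfold swN; rw [if_neg (by omega), if_neg (by omega)]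
    have e2 : swN k j = j := by unfold swN; rw [if_neg (by omega), if_neg (by omega)]
    rw [e1, e2, lam_neg hij]
    exact conj_by_commute (rho_mul_self k)
      (((commute_wd_hi (rho n) comm_rho_rho (by omega)).mul_right
        (rho_comm_centerneg_hi (by omega))).mul_right
        (commute_wd_hi (rho n) comm_rho_rho (by omega)).inv_right)

/-- Conjugation of `λ_{i,j}` by `ρ_k` permutes the indices (full version). -/
lemma conj_lam {k i j : ℕ} (hk1 : 1 ≤ k) (hk2 : k ≤ n - 1)
    (hi1 : 1 ≤ i) (hi2 : i ≤ n) (hj1 : 1 ≤ j) (hj2 : j ≤ n) (hij : i ≠ j) :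
    rho n k * lam n i j * rho n k = lam n (swN k i) (swN k j) := by
  rcases lt_or_gt_of_ne hij with h | h
  · exact conj_lam_pos hk1 hk2 hi1 h hj2
  · exact conj_lam_neg hk1 hk2 hj1 h hi2

end UVB

/-- For `n ≥ 2`, the assignment (i,i+1) ↦ ρ_i determines a
homomorphism `s : S_n →* UVB n` which is a section of ι, and `UVB n` is the internal
semidirect product of the normal subgroup `UVP n = ker ι` by `s(S_n)`; moreover the
corresponding action of `S_n` on `UVP n` permutes the indices of the generators λ_{i,j}. -/
theorem statement2 (n : ℕ) (hn : 2 ≤ n)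
    (ι : UVB n →* Equiv.Perm (Fin n)) (hι : IsIota n ι) :
    ∃ s : Equiv.Perm (Fin n) →* UVB n,
      IsPermSection n s ∧
      ι.comp s = MonoidHom.id (Equiv.Perm (Fin n)) ∧
      (MonoidHom.ker ι).Normal ∧
      Subgroup.IsComplement' ι.ker s.range ∧
      ∀ (π : Equiv.Perm (Fin n)) (i j : ℕ) (h1 : 1 ≤ i) (h2 : i ≤ n) (h3 : 1 ≤ j)
        (h4 : j ≤ n) (hij : i ≠ j),
        s π * UVB.lam n i j * (s π)⁻¹ =
          UVB.lam n ((π ⟨i - 1, by omega⟩).val + 1) ((π ⟨j - 1, by omega⟩).val + 1) := by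
  obtain ⟨m, rfl⟩ : ∃ m, n = m + 1 := ⟨n - 1, by omega⟩
  have hm : 1 ≤ m := by omega
  -- construct the section
  obtain ⟨s, hs⟩ := exists_coxLift (G := UVB (m + 1)) (m + 1)
    (fun t => UVB.rho (m + 1) (t + 1))
    (fun t => UVB.rho_mul_self (t + 1))
    (fun a b hab => UVB.comm_rho_rho (a + 1) (b + 1) (by omega))
    (fun t ht => UVB.braid_rho (k := t + 1) (by omega) (by omega))
  -- basic recomputations
  have hts : ∀ t (ht : t + 1 < m + 1),
      tsw (m + 1) t = Equiv.swap ⟨t, by omega⟩ ⟨t + 1, ht⟩ := fun t ht => by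
    rw [tsw, dif_pos ht]
  have hst : ∀ t (ht : t + 1 < m + 1),
      s (tsw (m + 1) t) = UVB.rho (m + 1) (t + 1) := fun t ht => by
    rw [hts t ht]; exact hs t ht
  have hcomp : ι.comp s = MonoidHom.id (Equiv.Perm (Fin (m + 1))) := by
    apply MonoidHom.eq_of_eqOn_denseM (closure_tsw (m + 1))
    rintro σ ⟨t, ht, rfl⟩
    show ι (s (tsw (m + 1) t)) = tsw (m + 1) t
    rw [hst t ht, (hι (t + 1) (by omega) (by omega)).2, hts t ht]
    rfl
  have hsi : ∀ x, ι (s x) = x := fun x => by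
    have := DFunLike.congr_fun hcomp x
    simpa using this
  refine ⟨s, ?_, hcomp, MonoidHom.normal_ker ι, ?_, ?_⟩
  -- IsPermSection
  · intro k h1 h2
    have e : k - 1 + 1 = k := by omega
    have h := hs (k - 1) (by omega)
    simp only [e] at h
    exact h
  -- complement
  · rw [Subgroup.isComplement'_def, Subgroup.isComplement_iff_existsUnique]
    intro g
    refine ⟨⟨⟨g * (s (ι g))⁻¹, ?_⟩, ⟨s (ι g), ?_⟩⟩, ?_, ?_⟩
    · show g * (s (ι g))⁻¹ ∈ (ι.ker : Set (UVB (m + 1)))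
      simp only [SetLike.mem_coe, MonoidHom.mem_ker, map_mul, map_inv, hsi,
        mul_inv_cancel]
    · show s (ι g) ∈ (s.range : Set (UVB (m + 1)))
      exact ⟨ι g, rfl⟩
    · show g * (s (ι g))⁻¹ * s (ι g) = g
      exact inv_mul_cancel_right g (s (ι g))
    · rintro ⟨⟨a, ha⟩, ⟨b, hb⟩⟩ heq
      obtain ⟨x, rfl⟩ := MonoidHom.mem_range.mp (SetLike.mem_coe.mp hb)
      have heq' : a * s x = g := heq
      have hx : x = ι g := by
        have h2 := congrArg ι heq'
        rw [map_mul, show ι a = 1 from MonoidHom.mem_ker.mp (SetLike.mem_coe.mp ha),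
          one_mul, hsi] at h2
        exact h2
      subst hx
      have hab : a = g * (s (ι g))⁻¹ := eq_mul_inv_of_mul_eq heq'
      refine Prod.ext (Subtype.ext ?_) (Subtype.ext ?_)
      · exact hab
      · rfl
  -- the action on the λ's
  · have key : ∀ π : Equiv.Perm (Fin (m + 1)), ∀ a b : Fin (m + 1), a ≠ b →
        s π * UVB.lam (m + 1) (a.val + 1) (b.val + 1) * (s π)⁻¹ =
          UVB.lam (m + 1) ((π a).val + 1) ((π b).val + 1) := by
      intro π
      have hπ : π ∈ Submonoid.closure
          {σ : Equiv.Perm (Fin (m + 1)) | ∃ t, t + 1 < m + 1 ∧ σ = tsw (m + 1) t} := by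
        rw [closure_tsw]; exact Submonoid.mem_top π
      induction hπ using Submonoid.closure_induction with
      | mem σ hσ =>
        obtain ⟨t, ht, rfl⟩ := hσ
        intro a b hab
        have hne : a.val + 1 ≠ b.val + 1 := by
          intro hcon
          exact hab (Fin.ext (by omega))
        rw [hst t ht, UVB.rho_inv,
          UVB.conj_lam (by omega) (by omega) (by omega) (by omega) (by omega)
            (by omega) hne]
        have hidx : ∀ c : Fin (m + 1),
            swN (t + 1) (c.val + 1) = ((tsw (m + 1) t) c).val + 1 := by
          intro c
          rw [hts t ht]
          rcases (show c.val = t ∨ c.val = t + 1 ∨ (c.val ≠ t ∧ c.val ≠ t + 1)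
              by omega) with hcc | hcc | ⟨hcc, hcc2⟩
          · have hc : c = ⟨t, by omega⟩ := Fin.ext hcc
            rw [hc, Equiv.swap_apply_left]
            unfold swN
            rw [if_pos (by omega)]
          · have hc : c = ⟨t + 1, by omega⟩ := Fin.ext hcc
            rw [hc, Equiv.swap_apply_right]
            unfold swN
            rw [if_neg (by omega), if_pos (by omega)]
          · rw [Equiv.swap_apply_of_ne_of_ne (by simp [Fin.ext_iff]; omega)
              (by simp [Fin.ext_iff]; omega)]
            unfold swN
            rw [if_neg (by omega), if_neg (by omega)]
        rw [hidx a, hidx b]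
      | one =>
        intro a b hab
        rw [map_one, one_mul, inv_one, mul_one]
        rfl
      | mul σ τ hσ hτ ihσ ihτ =>
        intro a b hab
        have hab2 : τ a ≠ τ b := fun hcon => hab (τ.injective hcon)
        rw [map_mul]
        have st1 : s σ * s τ * UVB.lam (m + 1) (a.val + 1) (b.val + 1) *
            (s σ * s τ)⁻¹
            = s σ * (s τ * UVB.lam (m + 1) (a.val + 1) (b.val + 1) * (s τ)⁻¹) *
              (s σ)⁻¹ := by group
        rw [st1, ihτ a b hab, ihσ (τ a) (τ b) hab2]
        rfl
    intro π i j h1 h2 h3 h4 hij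
    have hne : (⟨i - 1, by omega⟩ : Fin (m + 1)) ≠ ⟨j - 1, by omega⟩ := by
      intro hcon
      have he : i - 1 = j - 1 := congrArg Fin.val hcon
      omega
    have h := key π ⟨i - 1, by omega⟩ ⟨j - 1, by omega⟩ hne
    rw [show (⟨i - 1, by omega⟩ : Fin (m + 1)).val + 1 = i from by
        show i - 1 + 1 = i; omega,
      show (⟨j - 1, by omega⟩ : Fin (m + 1)).val + 1 = j from by
        show j - 1 + 1 = j; omega] at h
    exact h
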